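/- Let α > 0 with n < α < n+1 for a natural number n, and let f be (n+1)-times continuously differentiable on [a, x]. Define the Letnikov derivative via formula (with s ≥ n an integer and f (s+1)-times continuously differentiable): G_s := ∑_{k=0}^{s} f^{(k)}(a)(x-a)^{k-α}/Γ(k-α+1) + (1/Γ(s-α+1)) ∫_a^x (x-τ)^{s-α} f^{(s+1)}(τ) dτ. Then G_{s+1} = G_s, i.e., the value is independent of the choice of s ≥ n. -/

import Mathlib

open intervalIntegral Real

theorem letnikov_formula_consistency
    (a x α : ℝ) (hax : a < x) (n s : ℕ) (hns : n ≤ s)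
    (hα1 : (n : ℝ) < α) (hα2 : α < n + 1)
    (f : ℝ → ℝ) (hf : ContDiffOn ℝ (s + 2) f (Set.Icc a x)) :
    ((∑ k ∈ Finset.range (s + 2),
        iteratedDerivWithin k f (Set.Icc a x) a * (x - a) ^ ((k : ℝ) - α) /
          Real.Gamma ((k : ℝ) - α + 1)) +
      (1 / Real.Gamma ((s : ℝ) + 1 - α + 1)) *
        ∫ τ in a..x, (x - τ) ^ ((s : ℝ) + 1 - α) *
          iteratedDerivWithin (s + 2) f (Set.Icc a x) τ) =
    ((∑ k ∈ Finset.range (s + 1),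
        iteratedDerivWithin k f (Set.Icc a x) a * (x - a) ^ ((k : ℝ) - α) /
          Real.Gamma ((k : ℝ) - α + 1)) +
      (1 / Real.Gamma ((s : ℝ) - α + 1)) *
        ∫ τ in a..x, (x - τ) ^ ((s : ℝ) - α) *
          iteratedDerivWithin (s + 1) f (Set.Icc a x) τ) := by
  set g : ℝ → ℝ := iteratedDerivWithin (s + 1) f (Set.Icc a x) with hg
  set g' : ℝ → ℝ := iteratedDerivWithin (s + 2) f (Set.Icc a x) with hg'
  set p : ℝ := (s : ℝ) + 1 - α with hp
  have hsα : α < (s : ℝ) + 1 := lt_of_lt_of_le hα2 (by exact_mod_cast Nat.add_le_add_right hns 1)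
  have hp0 : 0 < p := by simp [hp]; linarith
  have hqm1 : (-1 : ℝ) < p - 1 := by linarith
  have hud : UniqueDiffOn ℝ (Set.Icc a x) := uniqueDiffOn_Icc hax
  -- continuity of g and g'
  have hgc : ContinuousOn g (Set.Icc a x) :=
    hf.continuousOn_iteratedDerivWithin (by exact_mod_cast Nat.le_succ (s+1)) hud
  have hg'c : ContinuousOn g' (Set.Icc a x) :=
    hf.continuousOn_iteratedDerivWithin le_rfl hud
  -- differentiability of g with derivative g'
  have hgd : ∀ τ ∈ Set.Ioo a x, HasDerivAt g (g' τ) τ := by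
    intro τ hτ
    have hτm : τ ∈ Set.Icc a x := Set.Ioo_subset_Icc_self hτ
    have hd : DifferentiableWithinAt ℝ g (Set.Icc a x) τ :=
      hf.differentiableOn_iteratedDerivWithin (by exact_mod_cast Nat.lt_succ_self (s+1)) hud τ hτm
    have hnd : Set.Icc a x ∈ nhds τ := Icc_mem_nhds hτ.1 hτ.2
    have : HasDerivWithinAt g (derivWithin g (Set.Icc a x) τ) (Set.Icc a x) τ :=
      hd.hasDerivWithinAt
    have heq : derivWithin g (Set.Icc a x) τ = g' τ := by
      rw [hg', hg]
      exact (congrFun (iteratedDerivWithin_succ (n := s + 1) (f := f) (s := Set.Icc a x)) τ).symm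
    rw [heq] at this
    exact this.hasDerivAt hnd
  -- the function F for integration by parts
  set F : ℝ → ℝ := fun τ => (x - τ) ^ p * g τ with hF
  have hFd : ∀ τ ∈ Set.Ioo a x, HasDerivAt F
      (-(p * (x - τ) ^ (p - 1)) * g τ + (x - τ) ^ p * g' τ) τ := by
    intro τ hτ
    have hx1 : HasDerivAt (fun τ : ℝ => x - τ) (-1) τ := by
      simpa using (hasDerivAt_id τ).const_sub x
    have h1 : HasDerivAt (fun τ : ℝ => (x - τ) ^ p) (-(p * (x - τ) ^ (p - 1))) τ := by
      have hne : x - τ ≠ 0 := sub_ne_zero.2 (ne_of_gt hτ.2)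
      have := (Real.hasDerivAt_rpow_const (p := p) (Or.inl hne)).comp τ hx1
      simpa [mul_comm, mul_assoc, Function.comp_def] using this
    simpa [hF, Pi.mul_def] using h1.mul (hgd τ hτ)
  -- integrability facts
  have hint1 : IntervalIntegrable (fun τ => (x - τ) ^ (p - 1) * g τ) MeasureTheory.volume a x := by
    have h0 : IntervalIntegrable (fun t : ℝ => t ^ (p - 1)) MeasureTheory.volume (x - a) (x - x) :=
      intervalIntegral.intervalIntegrable_rpow' hqm1
    have h1 : IntervalIntegrable (fun τ : ℝ => (x - τ) ^ (p - 1)) MeasureTheory.volume a x := by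
      simpa using h0.comp_sub_left x
    exact h1.mul_continuousOn (by rwa [Set.uIcc_of_le hax.le])
  have hint2 : IntervalIntegrable (fun τ => (x - τ) ^ p * g' τ) MeasureTheory.volume a x := by
    apply ContinuousOn.intervalIntegrable
    rw [Set.uIcc_of_le hax.le]
    exact ((continuous_const.sub continuous_id).continuousOn.rpow_const
      (fun τ _ => Or.inr hp0.le)).mul hg'c
  have hintF : IntervalIntegrable
      (fun τ => -(p * (x - τ) ^ (p - 1)) * g τ + (x - τ) ^ p * g' τ) MeasureTheory.volume a x := by
    have := (hint1.const_mul (-p)).add hint2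
    simpa [mul_assoc, neg_mul] using this
  -- continuity of F
  have hFc : ContinuousOn F (Set.Icc a x) :=
    (((continuous_const.sub continuous_id).continuousOn.rpow_const
      (fun τ _ => Or.inr hp0.le))).mul hgc
  -- FTC
  have hftc : (∫ τ in a..x, (-(p * (x - τ) ^ (p - 1)) * g τ + (x - τ) ^ p * g' τ))
      = F x - F a :=
    intervalIntegral.integral_eq_sub_of_hasDerivAt_of_le hax.le hFc hFd hintF
  have hFx : F x = 0 := by simp [hF, Real.zero_rpow (ne_of_gt hp0)]
  have hsplit : (∫ τ in a..x, (-(p * (x - τ) ^ (p - 1)) * g τ + (x - τ) ^ p * g' τ))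
      = -p * (∫ τ in a..x, (x - τ) ^ (p - 1) * g τ) + ∫ τ in a..x, (x - τ) ^ p * g' τ := by
    have h1 : (fun τ => -(p * (x - τ) ^ (p - 1)) * g τ + (x - τ) ^ p * g' τ)
        = fun τ => -p * ((x - τ) ^ (p - 1) * g τ) + (x - τ) ^ p * g' τ := by
      funext τ; ring
    rw [h1, intervalIntegral.integral_add (hint1.const_mul (-p)) hint2,
      intervalIntegral.integral_const_mul]
  have hkey : p * (∫ τ in a..x, (x - τ) ^ (p - 1) * g τ)
      = (x - a) ^ p * g a + ∫ τ in a..x, (x - τ) ^ p * g' τ := by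
    have := hftc
    rw [hsplit, hFx] at this
    simp only [hF, zero_sub] at this
    linarith
  -- Gamma recurrence
  have hΓpos : 0 < Real.Gamma ((s : ℝ) - α + 1) := Real.Gamma_pos_of_pos (by linarith)
  have hΓ : Real.Gamma ((s : ℝ) + 1 - α + 1) = p * Real.Gamma ((s : ℝ) - α + 1) := by
    have h := Real.Gamma_add_one (s := (s : ℝ) - α + 1) (ne_of_gt (by linarith : (0:ℝ) < (s : ℝ) - α + 1))
    have he : (s : ℝ) + 1 - α + 1 = ((s : ℝ) - α + 1) + 1 := by ring
    rw [he, h, hp]; ring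
  rw [Finset.sum_range_succ]
  have hpe2 : (((s + 1 : ℕ)) : ℝ) - α = p := by push_cast [hp]; ring
  have hterm : iteratedDerivWithin (s + 1) f (Set.Icc a x) a = g a := rfl
  rw [hterm, hpe2]
  have hpe : ((s : ℝ)) - α = p - 1 := by rw [hp]; ring
  simp only [hpe] at *
  set q : ℝ := Real.Gamma (p - 1 + 1) with hq
  set I1 : ℝ := ∫ τ in a..x, (x - τ) ^ (p - 1) * g τ with hI1
  set I2 : ℝ := ∫ τ in a..x, (x - τ) ^ p * g' τ with hI2
  have hΓp : Real.Gamma (p + 1) = p * q := hΓ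
  rw [hΓp]
  have hqne : q ≠ 0 := ne_of_gt hΓpos
  have hpne : p ≠ 0 := ne_of_gt hp0
  clear_value p q I1 I2
  have hmain : g a * (x - a) ^ p / (p * q) + 1 / (p * q) * I2 = 1 / q * I1 := by
    field_simp
    linear_combination (-1) * hkey
  linarith [hmain]
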